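/- Under the abstract axioms (A1)–(A5), suppose u ∈ X, w ∈ ω(u), and α(w) ∩ ω(w) = ∅. Then there exists σ* ≥ 0 such that W(u¹, w¹) = k(w) for every u¹ ∈ cl{φ^σ(u) : σ ≥ σ*} and w¹ ∈ cl(γ(w)) with u¹ ≠ w¹, where k(w) is the constant value of W on distinct pairs from cl(γ(w)). In particular, π(φ^σ(u)) ∉ π(cl(γ(w))) for all σ ≥ σ*. -/

import Mathlib

open Filter Topology Set

section helpers

lemma const_on_int {f : ℝ → ℤ} {s : Set ℝ} (hs : IsPreconnected s)
    (hf : ContinuousOn f s) {a b : ℝ} (ha : a ∈ s) (hb : b ∈ s) : f a = f b :=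
  (hs.image f hf).subsingleton (mem_image_of_mem f ha) (mem_image_of_mem f hb)

lemma int_mono_of_local (F : ℝ → ℤ) (ε : ℝ → ℝ) (hεpos : ∀ s, 0 < ε s)
    (Fright : ∀ s t, s < t → t < s + ε s → F t = F s)
    (Fleft : ∀ s t, s - ε s < t → t < s → F s ≤ F t) :
    ∀ s t : ℝ, s ≤ t → F t ≤ F s := by
  intro s t hst
  rcases eq_or_lt_of_le hst with rfl | hlt
  · exact le_refl _
  set A : Set ℝ := {r | r ∈ Icc s t ∧ F r ≤ F s} with hA
  have hsA : s ∈ A := ⟨⟨le_refl s, le_of_lt hlt⟩, le_refl _⟩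
  have hbdd : BddAbove A := ⟨t, fun r hr => hr.1.2⟩
  have hms : s ≤ sSup A := le_csSup hbdd hsA
  have hmt : sSup A ≤ t := csSup_le ⟨s, hsA⟩ (fun r hr => hr.1.2)
  have hFm : F (sSup A) ≤ F s := by
    rcases eq_or_lt_of_le hms with heq | hlt'
    · rw [← heq]
    obtain ⟨r, hrA, hrm⟩ := exists_lt_of_lt_csSup ⟨s, hsA⟩
      (show sSup A - ε (sSup A) / 2 < sSup A by linarith [hεpos (sSup A)])
    have hrle : r ≤ sSup A := le_csSup hbdd hrA
    rcases eq_or_lt_of_le hrle with heq | hrlt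
    · rw [← heq]; exact hrA.2
    · exact le_trans (Fleft (sSup A) r (by linarith [hεpos (sSup A)]) hrlt) hrA.2
  have hmeq : sSup A = t := by
    by_contra hne
    have hmt' : sSup A < t := lt_of_le_of_ne hmt hne
    have ht'm : sSup A < min t (sSup A + ε (sSup A) / 2) :=
      lt_min hmt' (by linarith [hεpos (sSup A)])
    have ht'ε : min t (sSup A + ε (sSup A) / 2) < sSup A + ε (sSup A) :=
      lt_of_le_of_lt (min_le_right _ _) (by linarith [hεpos (sSup A)])
    have heq : F (min t (sSup A + ε (sSup A) / 2)) = F (sSup A) := Fright _ _ ht'm ht'ε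
    have ht'A : min t (sSup A + ε (sSup A) / 2) ∈ A :=
      ⟨⟨by linarith, min_le_left _ _⟩, by rw [heq]; exact hFm⟩
    have := le_csSup hbdd ht'A
    linarith
  rw [← hmeq]; exact hFm

lemma flow_mono {X : Type*} [TopologicalSpace X]
    (φ : ℝ → X → X)
    (hφc : Continuous fun p : ℝ × X => φ p.1 p.2)
    (hφadd : ∀ σ σ' x, φ (σ + σ') x = φ σ (φ σ' x))
    (S : Set (X × X)) (hScl : IsClosed S)
    (W : X → X → ℤ)
    (hWc : ContinuousOn (fun q : X × X => W q.1 q.2) Sᶜ)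
    (hA4 : ∀ u v : X, (u, v) ∈ S → u ≠ v →
      ∃ ε > (0 : ℝ), ∀ σ : ℝ, σ ≠ 0 → |σ| < ε → (φ σ u, φ σ v) ∉ S)
    (hA5 : ∀ u v : X, (u, v) ∈ S → u ≠ v →
      ∃ ε > (0 : ℝ), ∀ σ σ' : ℝ, -ε < σ → σ < 0 → 0 < σ' → σ' < ε →
        W (φ σ' u) (φ σ' v) < W (φ σ u) (φ σ v))
    (x y : X) (hxy : ∀ s : ℝ, φ s x ≠ φ s y) :
    ∀ a b : ℝ, a ≤ b → (φ a x, φ a y) ∉ S → (φ b x, φ b y) ∉ S →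
      W (φ b x) (φ b y) ≤ W (φ a x) (φ a y) := by
  set P : ℝ → X × X := fun s => (φ s x, φ s y) with hP
  have hPc : Continuous P := by
    refine Continuous.prodMk ?_ ?_ <;>
      exact hφc.comp (continuous_id.prodMk continuous_const)
  set f : ℝ → ℤ := fun s => W (φ s x) (φ s y) with hf
  have fcont : ∀ I : Set ℝ, (∀ s ∈ I, P s ∉ S) → ContinuousOn f I := by
    intro I hI
    exact (hWc.comp hPc.continuousOn (fun s hs => hI s hs) : _)
  have constI : ∀ I : Set ℝ, IsPreconnected I → (∀ s ∈ I, P s ∉ S) →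
      ∀ c ∈ I, ∀ d ∈ I, f c = f d := by
    intro I hI hIS c hc d hd
    exact const_on_int hI (fcont I hIS) hc hd
  have hloc : ∀ s : ℝ, ∃ ε > (0:ℝ),
      (∀ t, t ≠ s → |t - s| < ε → P t ∉ S) ∧
      (∀ t t', s < t → t < s + ε → s < t' → t' < s + ε → f t = f t') ∧
      (∀ t t', s - ε < t → t < s → s - ε < t' → t' < s → f t = f t') ∧
      (∀ t t', s - ε < t → t < s → s < t' → t' < s + ε → f t' ≤ f t) ∧
      (P s ∉ S → ∀ t, |t - s| < ε → f t = f s) := by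
    intro s
    by_cases hs : P s ∈ S
    · obtain ⟨ε₄, hε₄, h4⟩ := hA4 (φ s x) (φ s y) hs (hxy s)
      obtain ⟨ε₅, hε₅, h5⟩ := hA5 (φ s x) (φ s y) hs (hxy s)
      have key4 : ∀ t : ℝ, t ≠ s → |t - s| < min ε₄ ε₅ → P t ∉ S := by
        intro t ht hlt
        have h'' := h4 (t - s) (sub_ne_zero.2 ht)
          (lt_of_lt_of_le hlt (min_le_left _ _))
        have e1 : φ (t - s) (φ s x) = φ t x := by
          rw [← hφadd]; ring_nf
        have e2 : φ (t - s) (φ s y) = φ t y := by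
          rw [← hφadd]; ring_nf
        rw [e1, e2] at h''; exact h''
      refine ⟨min ε₄ ε₅, lt_min hε₄ hε₅, key4, ?_, ?_, ?_, fun h => absurd hs h⟩
      · intro t t' h1 h2 h3 h4'
        refine constI (Ioo s (s + min ε₄ ε₅)) isPreconnected_Ioo ?_ t ⟨h1, h2⟩ t' ⟨h3, h4'⟩
        intro r hr
        exact key4 r (ne_of_gt hr.1)
          (by rw [abs_of_pos (by linarith [hr.1] : (0:ℝ) < r - s)]; linarith [hr.2])
      · intro t t' h1 h2 h3 h4'
        refine constI (Ioo (s - min ε₄ ε₅) s) isPreconnected_Ioo ?_ t ⟨h1, h2⟩ t' ⟨h3, h4'⟩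
        intro r hr
        exact key4 r (ne_of_lt hr.2)
          (by rw [abs_of_neg (by linarith [hr.2] : r - s < 0)]; linarith [hr.1])
      · intro t t' h1 h2 h3 h4'
        have e1 : φ (t - s) (φ s x) = φ t x := by rw [← hφadd]; ring_nf
        have e2 : φ (t - s) (φ s y) = φ t y := by rw [← hφadd]; ring_nf
        have e3 : φ (t' - s) (φ s x) = φ t' x := by rw [← hφadd]; ring_nf
        have e4 : φ (t' - s) (φ s y) = φ t' y := by rw [← hφadd]; ring_nf
        have h'' := h5 (t - s) (t' - s) (by linarith [min_le_right ε₄ ε₅]) (by linarith)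
          (by linarith) (by linarith [min_le_right ε₄ ε₅])
        rw [e1, e2, e3, e4] at h''
        exact le_of_lt h''
    · have hopen : IsOpen (P ⁻¹' Sᶜ) := hScl.isOpen_compl.preimage hPc
      obtain ⟨ε, hε, hball⟩ := Metric.isOpen_iff.1 hopen s hs
      have hoff : ∀ t, |t - s| < ε → P t ∉ S := by
        intro t ht
        have : t ∈ Metric.ball s ε := by rwa [Metric.mem_ball, Real.dist_eq]
        exact hball this
      have hconst : ∀ t, |t - s| < ε → f t = f s := by
        intro t ht
        refine constI (Metric.ball s ε) (convex_ball s ε).isPreconnected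
          (fun r hr => hoff r (by rwa [Metric.mem_ball, Real.dist_eq] at hr)) t ?_ s ?_
        · rwa [Metric.mem_ball, Real.dist_eq]
        · simp [hε]
      refine ⟨ε, hε, fun t _ => hoff t, ?_, ?_, ?_, fun _ => hconst⟩
      · intro t t' h1 h2 h3 h4'
        rw [hconst t (by rw [abs_of_pos] <;> linarith),
          hconst t' (by rw [abs_of_pos] <;> linarith)]
      · intro t t' h1 h2 h3 h4'
        rw [hconst t (by rw [abs_of_neg] <;> linarith),
          hconst t' (by rw [abs_of_neg] <;> linarith)]
      · intro t t' h1 h2 h3 h4'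
        rw [hconst t (by rw [abs_of_neg] <;> linarith),
          hconst t' (by rw [abs_of_pos] <;> linarith)]
  choose ε hεpos hc1 hc2 hc3 hc4 hc5 using hloc
  have Fright : ∀ s t, s < t → t < s + ε s → f (t + ε t / 2) = f (s + ε s / 2) := by
    intro s t hst hts
    have hεt := hεpos t
    have hεs := hεpos s
    have h1 : t < min (t + ε t) (s + ε s) := lt_min (by linarith) hts
    have hpt : t < (t + min (t + ε t) (s + ε s)) / 2 := by linarith
    have hptε : (t + min (t + ε t) (s + ε s)) / 2 < t + ε t := by
      have := min_le_left (t + ε t) (s + ε s); linarith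
    have hpsε : (t + min (t + ε t) (s + ε s)) / 2 < s + ε s := by
      have := min_le_right (t + ε t) (s + ε s); linarith
    have e1 := hc2 t (t + ε t / 2) ((t + min (t + ε t) (s + ε s)) / 2)
      (by linarith) (by linarith) hpt hptε
    have e2 := hc2 s ((t + min (t + ε t) (s + ε s)) / 2) (s + ε s / 2)
      (by linarith) hpsε (by linarith) (by linarith)
    rw [e1, e2]
  have Fleft : ∀ s t, s - ε s < t → t < s → f (s + ε s / 2) ≤ f (t + ε t / 2) := by
    intro s t hst hts
    have hεt := hεpos t
    have hεs := hεpos s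
    have h1 : t < min (t + ε t) s := lt_min (by linarith) hts
    have hqt : t < (t + min (t + ε t) s) / 2 := by linarith
    have hqtε : (t + min (t + ε t) s) / 2 < t + ε t := by
      have := min_le_left (t + ε t) s; linarith
    have hqs : (t + min (t + ε t) s) / 2 < s := by
      have := min_le_right (t + ε t) s; linarith
    have hqs' : s - ε s < (t + min (t + ε t) s) / 2 := by linarith
    have e1 := hc2 t (t + ε t / 2) ((t + min (t + ε t) s) / 2)
      (by linarith) (by linarith) hqt hqtε
    have e2 := hc4 s ((t + min (t + ε t) s) / 2) (s + ε s / 2) hqs' hqs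
      (by linarith) (by linarith)
    rw [e1]; exact e2
  have Fat : ∀ s, P s ∉ S → f (s + ε s / 2) = f s := by
    intro s hs
    exact hc5 s hs (s + ε s / 2) (by
      rw [show s + ε s / 2 - s = ε s / 2 by ring,
        abs_of_pos (by linarith [hεpos s] : (0:ℝ) < ε s / 2)]
      linarith [hεpos s])
  have Fmono := int_mono_of_local (fun s => f (s + ε s / 2)) ε hεpos Fright Fleft
  intro a b hab ha hb
  have h := Fmono a b hab
  rw [Fat a ha, Fat b hb] at h
  exact h

end helpers

/-- under axioms (A1)–(A5), if w ∈ ω(u) and α(w) ∩ ω(w) = ∅,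
then there exists σ* ≥ 0 such that W(u¹, w¹) = k(w) for all
u¹ ∈ cl{φ^σ(u) : σ ≥ σ*} and w¹ ∈ cl(γ(w)) with u¹ ≠ w¹, where k(w) is the
constant value of W on distinct pairs from cl(γ(w)); in particular
π(φ^σ(u)) ∉ π(cl(γ(w))) for all σ ≥ σ*. -/


theorem stmt_19 {X : Type*} [TopologicalSpace X] [CompactSpace X] [T2Space X]
    (φ : ℝ → X → X)
    (hφc : Continuous fun p : ℝ × X => φ p.1 p.2)
    (hφ0 : ∀ x, φ 0 x = x)
    (hφadd : ∀ σ σ' x, φ (σ + σ') x = φ σ (φ σ' x))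
    (S : Set (X × X)) (hScl : IsClosed S)
    (hΔS : ∀ x : X, (x, x) ∈ S)
    (W : X → X → ℤ)
    -- (A1)
    (hWc : ContinuousOn (fun q : X × X => W q.1 q.2) Sᶜ)
    (hWsym : ∀ u v : X, (u, v) ∉ S → W u v = W v u)
    -- (A2), (A3)
    (π : X → ℝ × ℝ) (hπc : Continuous π)
    (hA3 : ∀ u v : X, π u = π v → (u, v) ∈ S)
    -- (A4)
    (hA4 : ∀ u v : X, (u, v) ∈ S → u ≠ v →
      ∃ ε > (0 : ℝ), ∀ σ : ℝ, σ ≠ 0 → |σ| < ε → (φ σ u, φ σ v) ∉ S)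
    -- (A5)
    (hA5 : ∀ u v : X, (u, v) ∈ S → u ≠ v →
      ∃ ε > (0 : ℝ), ∀ σ σ' : ℝ, -ε < σ → σ < 0 → 0 < σ' → σ' < ε →
        W (φ σ' u) (φ σ' v) < W (φ σ u) (φ σ v))
    (u w : X)
    (hw : ∃ σs : ℕ → ℝ, Tendsto σs atTop atTop ∧
      Tendsto (fun n => φ (σs n) u) atTop (nhds w))
    -- α(w) ∩ ω(w) = ∅
    (hαω : {z : X | ∃ σs : ℕ → ℝ, Tendsto σs atTop atBot ∧
        Tendsto (fun n => φ (σs n) w) atTop (nhds z)} ∩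
      {z : X | ∃ σs : ℕ → ℝ, Tendsto σs atTop atTop ∧
        Tendsto (fun n => φ (σs n) w) atTop (nhds z)} = ∅)
    -- k is the constant value of W on distinct pairs from cl(γ(w))
    (k : ℤ)
    (hk : ∀ w₁ ∈ closure {x : X | ∃ σ : ℝ, x = φ σ w},
      ∀ w₂ ∈ closure {x : X | ∃ σ : ℝ, x = φ σ w},
        w₁ ≠ w₂ → W w₁ w₂ = k) :
    ∃ σstar : ℝ, 0 ≤ σstar ∧
      (∀ u₁ ∈ closure {x : X | ∃ σ : ℝ, σstar ≤ σ ∧ x = φ σ u},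
        ∀ w₁ ∈ closure {x : X | ∃ σ : ℝ, x = φ σ w},
          u₁ ≠ w₁ → (u₁, w₁) ∉ S ∧ W u₁ w₁ = k) ∧
      (∀ σ : ℝ, σstar ≤ σ →
        π (φ σ u) ∉ π '' closure {x : X | ∃ σ' : ℝ, x = φ σ' w}) := by
  classical
  obtain ⟨σs, hσs, hcv⟩ := hw
  set γw : Set X := {x : X | ∃ σ : ℝ, x = φ σ w} with hγw
  set K : Set X := closure γw with hKdef
  have hKcl : IsClosed K := isClosed_closure
  have hKcpt : IsCompact K := hKcl.isCompact
  have hγK : γw ⊆ K := subset_closure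
  have hwγ : w ∈ γw := ⟨0, (hφ0 w).symm⟩
  have hwK : w ∈ K := hγK hwγ
  have hφcont : ∀ t : ℝ, Continuous (φ t) := fun t =>
    hφc.comp (continuous_const.prodMk continuous_id)
  have hinj : ∀ (t : ℝ) (a b : X), φ t a = φ t b → a = b := by
    intro t a b h
    have h2 := congrArg (φ (-t)) h
    rwa [← hφadd, ← hφadd, neg_add_cancel, hφ0, hφ0] at h2
  have flowγ : ∀ (t : ℝ), ∀ z ∈ γw, φ t z ∈ γw := by
    rintro t z ⟨σ, rfl⟩
    exact ⟨t + σ, (hφadd t σ w).symm⟩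
  have flowK : ∀ (t : ℝ), ∀ z ∈ K, φ t z ∈ K := by
    intro t z hz
    have h1 : φ t z ∈ φ t '' closure γw := mem_image_of_mem _ hz
    have h2 : φ t '' closure γw ⊆ closure (φ t '' γw) :=
      image_closure_subset_closure_image (hφcont t)
    have h3 : closure (φ t '' γw) ⊆ closure γw :=
      closure_mono (by rintro _ ⟨z', hz', rfl⟩; exact flowγ t z' hz')
    exact h3 (h2 h1)
  -- L1: no S-pairs among distinct points of K
  have L1 : ∀ v ∈ K, ∀ v' ∈ K, v ≠ v' → (v, v') ∉ S := by
    intro v hv v' hv' hne hS'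
    obtain ⟨ε, hε, h5⟩ := hA5 v v' hS' hne
    have hd : φ (ε/2) v ≠ φ (ε/2) v' := fun h => hne (hinj _ _ _ h)
    have hd' : φ (-(ε/2)) v ≠ φ (-(ε/2)) v' := fun h => hne (hinj _ _ _ h)
    have h1 := hk _ (flowK (ε/2) v hv) _ (flowK (ε/2) v' hv') hd
    have h2 := hk _ (flowK (-(ε/2)) v hv) _ (flowK (-(ε/2)) v' hv') hd'
    have h3 := h5 (-(ε/2)) (ε/2) (by linarith) (by linarith) (by linarith) (by linarith)
    omega
  have πinjK : ∀ v ∈ K, ∀ v' ∈ K, π v = π v' → v = v' := by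
    intro v hv v' hv' hπ
    by_contra hne
    exact L1 v hv v' hv' hne (hA3 v v' hπ)
  -- convergence through π
  have convK : ∀ (x : ℕ → X), (∀ n, x n ∈ K) → ∀ z, z ∈ K →
      Tendsto (fun n => π (x n)) atTop (nhds (π z)) → Tendsto x atTop (nhds z) := by
    intro x hx z hz hπt
    rw [tendsto_nhds]
    intro V hVopen hzV
    have hFcl : IsClosed (K \ V) := hKcl.sdiff hVopen
    have hπF : IsClosed (π '' (K \ V)) := (hFcl.isCompact.image hπc).isClosed
    have hπzF : π z ∉ π '' (K \ V) := by
      rintro ⟨y, hyF, hyz⟩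
      have hyzeq : y = z := πinjK y hyF.1 z hz hyz
      rw [hyzeq] at hyF
      exact hyF.2 hzV
    have hev := hπt.eventually (hπF.isOpen_compl.mem_nhds hπzF)
    filter_upwards [hev] with n hn
    by_contra hxV
    exact hn (mem_image_of_mem π ⟨hx n, hxV⟩)
  have seqK : ∀ x : ℕ → X, (∀ n, x n ∈ K) → ∃ z ∈ K, ∃ g : ℕ → ℕ, StrictMono g ∧
      Tendsto (fun n => x (g n)) atTop (nhds z) := by
    intro x hx
    obtain ⟨p, hp, g, hg, hpg⟩ := (hKcpt.image hπc).tendsto_subseq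
      (x := fun n => π (x n)) (fun n => mem_image_of_mem π (hx n))
    obtain ⟨z, hzK, rfl⟩ := hp
    exact ⟨z, hzK, g, hg, convK (fun n => x (g n)) (fun n => hx (g n)) z hzK hpg⟩
  have seq_clK : ∀ A : Set X, A ⊆ K → ∀ z, z ∈ K → z ∈ closure A →
      ∃ a : ℕ → X, (∀ m, a m ∈ A) ∧ Tendsto a atTop (nhds z) := by
    intro A hA z hzK hz
    have h1 : π z ∈ closure (π '' A) :=
      image_closure_subset_closure_image hπc (mem_image_of_mem π hz)
    obtain ⟨p, hp, hpt⟩ := mem_closure_iff_seq_limit.1 h1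
    choose a ha hπa using hp
    refine ⟨a, ha, convK a (fun m => hA (ha m)) z hzK ?_⟩
    exact hpt.congr (fun m => (hπa m).symm)
  -- alpha and omega limit sets of w
  set Al : Set X := {z : X | ∃ τ : ℕ → ℝ, Tendsto τ atTop atBot ∧
      Tendsto (fun n => φ (τ n) w) atTop (nhds z)} with hAldef
  set Om : Set X := {z : X | ∃ τ : ℕ → ℝ, Tendsto τ atTop atTop ∧
      Tendsto (fun n => φ (τ n) w) atTop (nhds z)} with hOmdef
  have hdisjAO : ∀ z, z ∈ Al → z ∈ Om → False := by
    intro z h1 h2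
    exact Set.eq_empty_iff_forall_notMem.mp hαω z ⟨h1, h2⟩
  have AlK : Al ⊆ K := by
    rintro z ⟨τ, hτ, hφτ⟩
    exact hKcl.mem_of_tendsto hφτ (Eventually.of_forall fun n => hγK ⟨τ n, rfl⟩)
  have OmK : Om ⊆ K := by
    rintro z ⟨τ, hτ, hφτ⟩
    exact hKcl.mem_of_tendsto hφτ (Eventually.of_forall fun n => hγK ⟨τ n, rfl⟩)
  have Al_inv : ∀ z ∈ Al, ∀ t : ℝ, φ t z ∈ Al := by
    rintro z ⟨τ, hτ, hφτ⟩ t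
    refine ⟨fun n => t + τ n, ?_, ?_⟩
    · exact tendsto_atBot_add_const_left _ t hτ
    · have h := ((hφcont t).tendsto z).comp hφτ
      exact h.congr (fun n => (hφadd t (τ n) w).symm)
  have Om_inv : ∀ z ∈ Om, ∀ t : ℝ, φ t z ∈ Om := by
    rintro z ⟨τ, hτ, hφτ⟩ t
    refine ⟨fun n => t + τ n, ?_, ?_⟩
    · exact tendsto_atTop_add_const_left _ t hτ
    · have h := ((hφcont t).tendsto z).comp hφτ
      exact h.congr (fun n => (hφadd t (τ n) w).symm)
  have Om_seqcl : ∀ (zs : ℕ → X), (∀ m, zs m ∈ Om) → ∀ z : X,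
      Tendsto zs atTop (nhds z) → z ∈ Om := by
    intro zs hzs z hlim
    have hzK : z ∈ K := hKcl.mem_of_tendsto hlim (Eventually.of_forall fun m => OmK (hzs m))
    have hpick : ∀ m : ℕ, ∃ σ : ℝ, (m:ℝ) ≤ σ ∧
        dist (π (φ σ w)) (π (zs m)) < 1/(m+1) := by
      intro m
      obtain ⟨τ, hτ, hφτ⟩ := hzs m
      have h1 : ∀ᶠ n in atTop, (m:ℝ) ≤ τ n := hτ.eventually_ge_atTop _
      have h2 : Tendsto (fun n => π (φ (τ n) w)) atTop (nhds (π (zs m))) :=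
        (hπc.tendsto _).comp hφτ
      have h3 : ∀ᶠ n in atTop, dist (π (φ (τ n) w)) (π (zs m)) < 1/(m+1) :=
        (Metric.tendsto_nhds.mp h2) _ (by positivity)
      obtain ⟨n, hn1, hn2⟩ := (h1.and h3).exists
      exact ⟨τ n, hn1, hn2⟩
    choose σ' hσ'1 hσ'2 using hpick
    have hσ'T : Tendsto σ' atTop atTop := tendsto_atTop_mono hσ'1 tendsto_natCast_atTop_atTop
    have hdz : Tendsto (fun m => dist (π (φ (σ' m) w)) (π z)) atTop (nhds 0) := by
      have hb : Tendsto (fun m : ℕ => 1/((m:ℝ)+1) + dist (π (zs m)) (π z)) atTop (nhds 0) := by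
        have h1 : Tendsto (fun m : ℕ => dist (π (zs m)) (π z)) atTop (nhds 0) :=
          tendsto_iff_dist_tendsto_zero.mp ((hπc.tendsto z).comp hlim)
        have h2 := tendsto_one_div_add_atTop_nhds_zero_nat.add h1
        simpa using h2
      refine squeeze_zero (fun m => dist_nonneg) (fun m => ?_) hb
      calc dist (π (φ (σ' m) w)) (π z)
          ≤ dist (π (φ (σ' m) w)) (π (zs m)) + dist (π (zs m)) (π z) := dist_triangle _ _ _
        _ ≤ 1/((m:ℝ)+1) + dist (π (zs m)) (π z) := by
            have := hσ'2 m; push_cast at this ⊢; linarith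
    have hconv2 : Tendsto (fun m => φ (σ' m) w) atTop (nhds z) :=
      convK _ (fun m => hγK ⟨σ' m, rfl⟩) z hzK (tendsto_iff_dist_tendsto_zero.mpr hdz)
    exact ⟨σ', hσ'T, hconv2⟩
  have Al_seqcl : ∀ (zs : ℕ → X), (∀ m, zs m ∈ Al) → ∀ z : X,
      Tendsto zs atTop (nhds z) → z ∈ Al := by
    intro zs hzs z hlim
    have hzK : z ∈ K := hKcl.mem_of_tendsto hlim (Eventually.of_forall fun m => AlK (hzs m))
    have hpick : ∀ m : ℕ, ∃ σ : ℝ, σ ≤ -(m:ℝ) ∧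
        dist (π (φ σ w)) (π (zs m)) < 1/(m+1) := by
      intro m
      obtain ⟨τ, hτ, hφτ⟩ := hzs m
      have h1 : ∀ᶠ n in atTop, τ n ≤ -(m:ℝ) := hτ.eventually_le_atBot _
      have h2 : Tendsto (fun n => π (φ (τ n) w)) atTop (nhds (π (zs m))) :=
        (hπc.tendsto _).comp hφτ
      have h3 : ∀ᶠ n in atTop, dist (π (φ (τ n) w)) (π (zs m)) < 1/(m+1) :=
        (Metric.tendsto_nhds.mp h2) _ (by positivity)
      obtain ⟨n, hn1, hn2⟩ := (h1.and h3).exists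
      exact ⟨τ n, hn1, hn2⟩
    choose σ' hσ'1 hσ'2 using hpick
    have hσ'T : Tendsto σ' atTop atBot := by
      refine tendsto_atBot_mono hσ'1 ?_
      exact tendsto_neg_atBot_iff.mpr tendsto_natCast_atTop_atTop
    have hdz : Tendsto (fun m => dist (π (φ (σ' m) w)) (π z)) atTop (nhds 0) := by
      have hb : Tendsto (fun m : ℕ => 1/((m:ℝ)+1) + dist (π (zs m)) (π z)) atTop (nhds 0) := by
        have h1 : Tendsto (fun m : ℕ => dist (π (zs m)) (π z)) atTop (nhds 0) :=
          tendsto_iff_dist_tendsto_zero.mp ((hπc.tendsto z).comp hlim)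
        have h2 := tendsto_one_div_add_atTop_nhds_zero_nat.add h1
        simpa using h2
      refine squeeze_zero (fun m => dist_nonneg) (fun m => ?_) hb
      calc dist (π (φ (σ' m) w)) (π z)
          ≤ dist (π (φ (σ' m) w)) (π (zs m)) + dist (π (zs m)) (π z) := dist_triangle _ _ _
        _ ≤ 1/((m:ℝ)+1) + dist (π (zs m)) (π z) := by
            have := hσ'2 m; push_cast at this ⊢; linarith
    have hconv2 : Tendsto (fun m => φ (σ' m) w) atTop (nhds z) :=
      convK _ (fun m => hγK ⟨σ' m, rfl⟩) z hzK (tendsto_iff_dist_tendsto_zero.mpr hdz)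
    exact ⟨σ', hσ'T, hconv2⟩
  have Om_ne : ∃ z, z ∈ Om := by
    obtain ⟨z, hzK, g, hg, hcg⟩ := seqK (fun n => φ (n : ℝ) w) (fun n => hγK ⟨_, rfl⟩)
    exact ⟨z, fun n => ((g n : ℕ) : ℝ),
      tendsto_natCast_atTop_atTop.comp hg.tendsto_atTop, hcg⟩
  have Al_ne : ∃ z, z ∈ Al := by
    obtain ⟨z, hzK, g, hg, hcg⟩ := seqK (fun n => φ (-(n : ℝ)) w) (fun n => hγK ⟨_, rfl⟩)
    refine ⟨z, fun n => -((g n : ℕ) : ℝ), ?_, hcg⟩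
    exact tendsto_neg_atBot_iff.mpr (tendsto_natCast_atTop_atTop.comp hg.tendsto_atTop)
  have wnotOm : w ∉ Om := by
    intro hwOm
    have hγOm : γw ⊆ Om := by rintro _ ⟨σ, rfl⟩; exact Om_inv w hwOm σ
    have hKOm : K ⊆ Om := by
      intro z hz
      obtain ⟨a, ha, hat⟩ := seq_clK γw hγK z hz hz
      exact Om_seqcl a (fun m => hγOm (ha m)) z hat
    obtain ⟨a, ha⟩ := Al_ne
    exact hdisjAO a ha (hKOm (AlK ha))
  have wnotAl : w ∉ Al := by
    intro hwAl
    have hγAl : γw ⊆ Al := by rintro _ ⟨σ, rfl⟩; exact Al_inv w hwAl σ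
    have hKAl : K ⊆ Al := by
      intro z hz
      obtain ⟨a, ha, hat⟩ := seq_clK γw hγK z hz hz
      exact Al_seqcl a (fun m => hγAl (ha m)) z hat
    obtain ⟨a, ha⟩ := Om_ne
    exact hdisjAO a (hKAl (OmK ha)) ha
  have wnotclAO : w ∉ closure (Al ∪ Om) := by
    intro h
    obtain ⟨a, ha, hat⟩ := seq_clK (Al ∪ Om) (union_subset AlK OmK) w hwK h
    by_cases hfa : ∃ᶠ m in atTop, a m ∈ Al
    · obtain ⟨g, hg, hmem⟩ := extraction_of_frequently_atTop hfa
      exact wnotAl (Al_seqcl (fun m => a (g m)) hmem w (hat.comp hg.tendsto_atTop))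
    · have hev : ∀ᶠ m in atTop, a m ∈ Om := by
        filter_upwards [not_frequently.mp hfa] with m hm
        rcases ha m with h' | h'
        · exact absurd h' hm
        · exact h'
      obtain ⟨g, hg, hmem⟩ := extraction_of_frequently_atTop hev.frequently
      exact wnotOm (Om_seqcl (fun m => a (g m)) hmem w (hat.comp hg.tendsto_atTop))
  -- the neighbourhood U of w with arc-bounded intersection with K
  obtain ⟨t0, ht0n, ht0cl, ht0s⟩ := exists_mem_nhds_isClosed_subset
    ((isClosed_closure (s := Al ∪ Om)).isOpen_compl.mem_nhds wnotclAO)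
  set U : Set X := interior t0 with hUdef
  have hUopen : IsOpen U := isOpen_interior
  have hwU : w ∈ U := mem_interior_iff_mem_nhds.2 ht0n
  have hclU : closure U ⊆ t0 := closure_minimal interior_subset ht0cl
  have hUAO : ∀ x, x ∈ closure U → x ∈ Al ∪ Om → False := by
    intro x hx hAO
    exact (ht0s (hclU hx)) (subset_closure hAO)
    -- decomposition of K
  have decomp : ∀ y ∈ K, (∃ t : ℝ, y = φ t w) ∨ y ∈ Al ∨ y ∈ Om := by
    intro y hy
    obtain ⟨a, ha, hat⟩ := seq_clK γw hγK y hy hy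
    choose t ht using ha
    by_cases hB : ∃ B : ℝ, ∃ᶠ m in atTop, |t m| ≤ B
    · obtain ⟨B, hfB⟩ := hB
      obtain ⟨g, hg, hmem⟩ := extraction_of_frequently_atTop hfB
      obtain ⟨tst, htst, g', hg', htt⟩ := (isCompact_Icc (a := -B) (b := B)).tendsto_subseq
        (x := fun m => t (g m)) (fun m => abs_le.mp (hmem m))
      left
      refine ⟨tst, ?_⟩
      have h1 : Tendsto (fun m => φ (t (g (g' m))) w) atTop (nhds (φ tst w)) :=
        (hφc.tendsto (tst, w)).comp (htt.prodMk_nhds tendsto_const_nhds)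
      have h2 : Tendsto (fun m => a (g (g' m))) atTop (nhds y) :=
        hat.comp ((hg.comp hg').tendsto_atTop)
      have h3 : Tendsto (fun m => φ (t (g (g' m))) w) atTop (nhds y) :=
        h2.congr (fun m => ht (g (g' m)))
      exact tendsto_nhds_unique h3 h1
    · push_neg at hB
      have htop : Tendsto (fun m => |t m|) atTop atTop := by
        rw [tendsto_atTop]
        intro B
        filter_upwards [hB B] with m hm
        exact le_of_lt hm
      by_cases hpos : ∃ᶠ m in atTop, 0 ≤ t m
      · obtain ⟨g, hg, hmem⟩ := extraction_of_frequently_atTop hpos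
        right; right
        refine ⟨fun m => t (g m), ?_, ?_⟩
        · have h1 : Tendsto (fun m => |t (g m)|) atTop atTop := htop.comp hg.tendsto_atTop
          exact h1.congr (fun m => abs_of_nonneg (hmem m))
        · exact (hat.comp hg.tendsto_atTop).congr (fun m => ht (g m))
      · right; left
        have hev : ∀ᶠ m in atTop, t m < 0 := by
          filter_upwards [not_frequently.mp hpos] with m hm
          exact lt_of_not_ge hm
        refine ⟨t, ?_, hat.congr (fun m => ht m)⟩
        rw [tendsto_atBot]
        intro B
        filter_upwards [htop.eventually_ge_atTop (max (-B) 0 + 1), hev] with m h1 h2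
        have h3 : |t m| = -t m := abs_of_neg h2
        have h4 := le_max_left (-B) 0
        linarith [h1, h3]
  -- arc bound near w
  have hT1ex : ∃ T1 : ℝ, 0 < T1 ∧ ∀ t : ℝ, φ t w ∈ closure U → |t| ≤ T1 := by
    by_contra hcon
    push_neg at hcon
    have hpick : ∀ m : ℕ, ∃ t : ℝ, φ t w ∈ closure U ∧ (m:ℝ) < |t| := by
      intro m
      obtain ⟨t, h1, h2⟩ := hcon ((m:ℝ)+1) (by positivity)
      exact ⟨t, h1, by linarith⟩
    choose t ht1 ht2 using hpick
    have htop : Tendsto (fun m => |t m|) atTop atTop :=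
      tendsto_atTop_mono (fun m => le_of_lt (ht2 m)) tendsto_natCast_atTop_atTop
    by_cases hpos : ∃ᶠ m in atTop, 0 ≤ t m
    · obtain ⟨g, hg, hmem⟩ := extraction_of_frequently_atTop hpos
      obtain ⟨z, hzK, g', hg', hcz⟩ := seqK (fun m => φ (t (g m)) w)
        (fun m => hγK ⟨_, rfl⟩)
      have hzOm : z ∈ Om := by
        refine ⟨fun m => t (g (g' m)), ?_, hcz⟩
        have h1 : Tendsto (fun m => |t (g (g' m))|) atTop atTop :=
          htop.comp ((hg.comp hg').tendsto_atTop)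
        exact h1.congr (fun m => abs_of_nonneg (hmem (g' m)))
      have hzU : z ∈ closure U :=
        isClosed_closure.mem_of_tendsto hcz (Eventually.of_forall fun m => ht1 (g (g' m)))
      exact hUAO z hzU (Or.inr hzOm)
    · have hev : ∀ᶠ m in atTop, t m < 0 := by
        filter_upwards [not_frequently.mp hpos] with m hm
        exact lt_of_not_ge hm
      obtain ⟨g, hg, hmem⟩ := extraction_of_frequently_atTop hev.frequently
      obtain ⟨z, hzK, g', hg', hcz⟩ := seqK (fun m => φ (t (g m)) w)
        (fun m => hγK ⟨_, rfl⟩)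
      have hzAl : z ∈ Al := by
        refine ⟨fun m => t (g (g' m)), ?_, hcz⟩
        rw [tendsto_atBot]
        intro B
        have h1 : Tendsto (fun m => |t (g (g' m))|) atTop atTop :=
          htop.comp ((hg.comp hg').tendsto_atTop)
        filter_upwards [h1.eventually_ge_atTop (max (-B) 0 + 1)] with m h2
        have h3 : |t (g (g' m))| = -(t (g (g' m))) := abs_of_neg (hmem (g' m))
        have h4 := le_max_left (-B) 0
        linarith
      have hzU : z ∈ closure U :=
        isClosed_closure.mem_of_tendsto hcz (Eventually.of_forall fun m => ht1 (g (g' m)))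
      exact hUAO z hzU (Or.inl hzAl)
  obtain ⟨T1, hT1pos, hT1b⟩ := hT1ex
  -- the orbit of u never enters K
  have ClaimC : ∀ σ : ℝ, φ σ u ∉ K := by
    intro σ hin
    have key : Tendsto (fun n => φ (σs n - σ) (φ σ u)) atTop (nhds w) := by
      refine hcv.congr (fun n => ?_)
      rw [← hφadd]; ring_nf
    have hsub : Tendsto (fun n => σs n - σ) atTop atTop := by
      have h := tendsto_atTop_add_const_right atTop (-σ) hσs
      exact h.congr (fun n => by ring)
    rcases decomp (φ σ u) hin with ⟨τ0, heq⟩ | hAl' | hOm'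
    · apply wnotOm
      refine ⟨fun n => σs n - σ + τ0, tendsto_atTop_add_const_right _ τ0 hsub, ?_⟩
      refine key.congr (fun n => ?_)
      rw [heq, ← hφadd]
    · apply wnotAl
      exact Al_seqcl (fun n => φ (σs n - σ) (φ σ u))
        (fun n => Al_inv _ hAl' _) w key
    · apply wnotOm
      exact Om_seqcl (fun n => φ (σs n - σ) (φ σ u))
        (fun n => Om_inv _ hOm' _) w key
  -- local constancy of W off S
  have Wloc : ∀ p q : X, (p, q) ∉ S → ∃ O : Set (X × X), IsOpen O ∧ (p, q) ∈ O ∧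
      (∀ r₁ r₂ : X, (r₁, r₂) ∈ O → ((r₁, r₂) ∉ S ∧ W r₁ r₂ = W p q)) := by
    intro p q hpq
    have hat : ContinuousAt (fun r : X × X => W r.1 r.2) (p, q) :=
      hWc.continuousAt (hScl.isOpen_compl.mem_nhds hpq)
    have h1 : (fun r : X × X => W r.1 r.2) ⁻¹' {W p q} ∈ nhds (p, q) :=
      hat.preimage_mem_nhds ((isOpen_discrete _).mem_nhds rfl)
    have h2 : Sᶜ ∈ nhds (p, q) := hScl.isOpen_compl.mem_nhds hpq
    obtain ⟨O, hOsub, hOopen, hOmem⟩ := mem_nhds_iff.1 (inter_mem h1 h2)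
    refine ⟨O, hOopen, hOmem, fun r₁ r₂ hr => ⟨(hOsub hr).2, (hOsub hr).1⟩⟩
    -- monotonicity along pair flow with u-orbit first coordinate
  have monoU : ∀ (τ : ℝ) (y : X), y ∈ K → ∀ a b : ℝ, a ≤ b →
      (φ (a + τ) u, φ a y) ∉ S → (φ (b + τ) u, φ b y) ∉ S →
      W (φ (b + τ) u) (φ b y) ≤ W (φ (a + τ) u) (φ a y) := by
    intro τ y hy a b hab ha hb
    have hxy : ∀ s : ℝ, φ s (φ τ u) ≠ φ s y := by
      intro s h
      have h1 : φ (s + τ) u = φ s y := by rw [hφadd]; exact h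
      exact ClaimC (s + τ) (h1 ▸ flowK s y hy)
    have e : ∀ s : ℝ, φ s (φ τ u) = φ (s + τ) u := fun s => (hφadd s τ u).symm
    have h := flow_mono φ hφc hφadd S hScl W hWc hA4 hA5 (φ τ u) y hxy a b hab
      (by rw [e]; exact ha) (by rw [e]; exact hb)
    rw [e, e] at h
    exact h
  -- late equality times along characteristics
  have LateK : ∀ (σ : ℝ) (y : X), y ∈ K → ∀ N : ℝ, ∃ s : ℝ, N ≤ s ∧
      (φ (s + σ) u, φ s y) ∉ S ∧ W (φ (s + σ) u) (φ s y) = k := by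
    intro σ y hy N
    have hbK : ∀ n : ℕ, φ (σs n - σ) y ∈ K := fun n => flowK _ y hy
    have hfreq : ∃ᶠ n in atTop, φ (σs n - σ) y ∉ U := by
      by_contra hev
      have hev' : ∀ᶠ n in atTop, φ (σs n - σ) y ∈ U := by
        filter_upwards [not_frequently.mp hev] with n hn
        exact not_not.mp hn
      obtain ⟨n₀, hn₀⟩ := hev'.exists
      rcases decomp _ (hbK n₀) with ⟨t₀, ht₀⟩ | h | h
      · have ht₀T : |t₀| ≤ T1 := hT1b t₀ (by rw [← ht₀]; exact subset_closure hn₀)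
        obtain ⟨n₁, hb1, hb2⟩ := ((hσs.eventually_ge_atTop (σs n₀ + 2*T1 + 2)).and hev').exists
        have e : φ (σs n₁ - σ) y = φ (σs n₁ - σs n₀ + t₀) w := by
          have e1 : φ (σs n₁ - σ) y = φ (σs n₁ - σs n₀) (φ (σs n₀ - σ) y) := by
            rw [← hφadd]; ring_nf
          rw [e1, ht₀, ← hφadd]
        have h1 := (abs_le.mp ht₀T).1
        have hmem := hT1b (σs n₁ - σs n₀ + t₀) (by rw [← e]; exact subset_closure hb2)
        rw [abs_of_pos (by linarith)] at hmem
        linarith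
      · exact hUAO _ (subset_closure hn₀) (Or.inl h)
      · exact hUAO _ (subset_closure hn₀) (Or.inr h)
    obtain ⟨g, hg, hgU⟩ := extraction_of_frequently_atTop hfreq
    obtain ⟨z, hzK, g', hg', hdz⟩ := seqK (fun n => φ (σs (g n) - σ) y) (fun n => hbK (g n))
    have hzU : z ∉ U :=
      (hUopen.isClosed_compl).mem_of_tendsto hdz (Eventually.of_forall fun n => hgU (g' n))
    have hzw : w ≠ z := fun h => hzU (h ▸ hwU)
    obtain ⟨O, hOopen, hOmem, hOprop⟩ := Wloc w z (L1 w hwK z hzK hzw)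
    have hwzk : W w z = k := hk w hwK z hzK hzw
    have hpair : Tendsto (fun n => ((φ (σs (g (g' n))) u, φ (σs (g (g' n)) - σ) y) : X × X))
        atTop (nhds (w, z)) := by
      refine Tendsto.prodMk_nhds ?_ hdz
      exact hcv.comp ((hg.comp hg').tendsto_atTop)
    have hNev : ∀ᶠ n in atTop, N + σ ≤ σs (g (g' n)) :=
      (hσs.comp ((hg.comp hg').tendsto_atTop)).eventually_ge_atTop _
    obtain ⟨n, hn1, hn2⟩ := ((hpair.eventually (hOopen.mem_nhds hOmem)).and hNev).exists
    obtain ⟨hnS, hnW⟩ := hOprop _ _ hn1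
    refine ⟨σs (g (g' n)) - σ, by linarith, ?_, ?_⟩
    · rw [show σs (g (g' n)) - σ + σ = σs (g (g' n)) by ring]
      exact hnS
    · rw [show σs (g (g' n)) - σ + σ = σs (g (g' n)) by ring]
      rw [hnW, hwzk]
  -- lower bound
  have ClaimP : ∀ (σ : ℝ) (y : X), y ∈ K → (φ σ u, y) ∉ S → k ≤ W (φ σ u) y := by
    intro σ y hy hS'
    obtain ⟨s, hs1, hsS, hsW⟩ := LateK σ y hy 1
    have h0 : (φ (0 + σ) u, φ 0 y) ∉ S := by rw [zero_add, hφ0]; exact hS'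
    have h := monoU σ y hy 0 s (by linarith) h0 hsS
    rw [hsW] at h
    rwa [zero_add, hφ0] at h
    -- eventually no crossings
  have Mweak : ∃ σ₀ : ℝ, 0 ≤ σ₀ ∧ ∀ σ, σ₀ ≤ σ → ∀ y ∈ K, (φ σ u, y) ∉ S := by
    by_contra hcon
    push_neg at hcon
    have hMaux : ∀ N : ℝ, ∃ σ, N ≤ σ ∧ ∃ y ∈ K, (φ σ u, y) ∈ S := by
      intro N
      obtain ⟨σ, h1, y, hy, h2⟩ := hcon (max N 0) (le_max_right _ _)
      exact ⟨σ, le_trans (le_max_left _ _) h1, y, hy, h2⟩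
    have hstep : ∀ n : ℕ, ∃ (j : ℕ) (η : ℝ) (d : X), n ≤ j ∧ 0 ≤ η ∧ η ≤ 1/(n+1) ∧
        d ∈ K ∧ d ∉ U ∧ (φ (-η + σs j) u, φ (-η) d) ∉ S ∧
        k + 1 ≤ W (φ (-η + σs j) u) (φ (-η) d) := by
      intro n
      obtain ⟨n', hn'1, hn'2⟩ := ((hσs.eventually_ge_atTop (σs n + 2*T1 + 2)).and
        (eventually_ge_atTop n)).exists
      obtain ⟨τ, hτ1, y, hy, hyS⟩ := hMaux (σs n' + 1)
      have hneq : φ τ u ≠ y := fun h => ClaimC τ (h ▸ hy)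
      obtain ⟨ε₄, hε₄, h4⟩ := hA4 _ _ hyS hneq
      obtain ⟨ε₅, hε₅, h5⟩ := hA5 _ _ hyS hneq
      set δ : ℝ := min (min ε₄ ε₅) 1 / 2 with hδdef
      have hmin1 : min (min ε₄ ε₅) 1 ≤ min ε₄ ε₅ := min_le_left _ _
      have hmin2 : min (min ε₄ ε₅) 1 ≤ 1 := min_le_right _ _
      have hmm1 : min ε₄ ε₅ ≤ ε₄ := min_le_left _ _
      have hmm2 : min ε₄ ε₅ ≤ ε₅ := min_le_right _ _
      have hδpos : 0 < δ := by
        have : 0 < min (min ε₄ ε₅) 1 := lt_min (lt_min hε₄ hε₅) one_pos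
        simp only [hδdef]; linarith
      have hδ4 : δ < ε₄ := by simp only [hδdef]; linarith
      have hδ5 : δ < ε₅ := by simp only [hδdef]; linarith
      have hδ1 : δ ≤ 1/2 := by simp only [hδdef]; linarith
      have hpostoff : (φ (δ + τ) u, φ δ y) ∉ S := by
        have h := h4 δ (ne_of_gt hδpos) (by rw [abs_of_pos hδpos]; exact hδ4)
        rwa [← hφadd] at h
      have hpostk : k ≤ W (φ (δ + τ) u) (φ δ y) :=
        ClaimP (δ + τ) (φ δ y) (flowK δ y hy) hpostoff
      have hpreoff : (φ (-δ + τ) u, φ (-δ) y) ∉ S := by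
        have h := h4 (-δ) (ne_of_lt (by linarith)) (by rw [abs_neg, abs_of_pos hδpos]; exact hδ4)
        rwa [← hφadd] at h
      have hdrop := h5 (-δ) δ (by linarith) (by linarith) hδpos hδ5
      rw [← hφadd, ← hφadd] at hdrop
      have hprek : k + 1 ≤ W (φ (-δ + τ) u) (φ (-δ) y) := by omega
      have hback : ∀ s : ℝ, s ≤ -δ → (φ (s + τ) u, φ s y) ∉ S →
          k + 1 ≤ W (φ (s + τ) u) (φ s y) := by
        intro s hs hsoff
        have h := monoU τ y hy s (-δ) hs hsoff hpreoff
        omega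
      have hkey : ∃ j : ℕ, n ≤ j ∧ σs j ≤ τ - 1 ∧ φ (σs j - τ) y ∉ U := by
        by_cases hc1U : φ (σs n - τ) y ∈ U
        · refine ⟨n', hn'2, by linarith, ?_⟩
          rcases decomp _ (flowK (σs n - τ) y hy) with ⟨t₀, ht₀⟩ | h | h
          · have ht₀T : |t₀| ≤ T1 := hT1b t₀ (by rw [← ht₀]; exact subset_closure hc1U)
            have e : φ (σs n' - τ) y = φ (σs n' - σs n + t₀) w := by
              have e1 : φ (σs n' - τ) y = φ (σs n' - σs n) (φ (σs n - τ) y) := by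
                rw [← hφadd]; ring_nf
              rw [e1, ht₀, ← hφadd]
            intro hmem
            have h1 := (abs_le.mp ht₀T).1
            have h2 := hT1b (σs n' - σs n + t₀) (by rw [← e]; exact subset_closure hmem)
            rw [abs_of_pos (by linarith)] at h2
            linarith
          · exact absurd (Or.inl h) (fun hh => hUAO _ (subset_closure hc1U) hh)
          · exact absurd (Or.inr h) (fun hh => hUAO _ (subset_closure hc1U) hh)
        · exact ⟨n, le_refl n, by linarith, hc1U⟩
      obtain ⟨j, hjn, hjτ, hjU⟩ := hkey
      have hrδ : σs j - τ ≤ -δ := by linarith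
      have hdK : φ (σs j - τ) y ∈ K := flowK _ y hy
      by_cases hES : (φ (σs j) u, φ (σs j - τ) y) ∈ S
      · have hne2 : φ (σs j) u ≠ φ (σs j - τ) y := fun h => ClaimC _ (h ▸ hdK)
        obtain ⟨ε, hε, h4'⟩ := hA4 _ _ hES hne2
        set η : ℝ := min (ε/2) (1/(n+1)) with hηdef
        have hηpos : 0 < η := lt_min (by linarith) (by positivity)
        have hηε : η < ε := lt_of_le_of_lt (min_le_left _ _) (by linarith)
        have hoff := h4' (-η) (ne_of_lt (by linarith)) (by rw [abs_neg, abs_of_pos hηpos]; exact hηε)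
        rw [← hφadd] at hoff
        refine ⟨j, η, φ (σs j - τ) y, hjn, le_of_lt hηpos, min_le_right _ _, hdK, hjU, ?_, ?_⟩
        · exact hoff
        · have e1 : -η + σs j = (σs j - τ - η) + τ := by ring
          have e2 : φ (-η) (φ (σs j - τ) y) = φ (σs j - τ - η) y := by
            rw [← hφadd]; ring_nf
          rw [e1, e2]
          refine hback (σs j - τ - η) (by linarith) ?_
          rw [← e1, ← e2]
          exact hoff
      · refine ⟨j, 0, φ (σs j - τ) y, hjn, le_refl 0, by positivity, hdK, hjU, ?_, ?_⟩
        · rw [neg_zero, zero_add, hφ0]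
          exact hES
        · rw [neg_zero, zero_add, hφ0]
          have h := hback (σs j - τ) hrδ (by
            rw [show σs j - τ + τ = σs j by ring]
            exact hES)
          rwa [show σs j - τ + τ = σs j by ring] at h
    choose j η d hj hη0 hη1 hdK hdU hoffS hval using hstep
    have hjt : Tendsto j atTop atTop := tendsto_atTop_mono hj tendsto_id
    have hηt : Tendsto η atTop (nhds 0) :=
      squeeze_zero hη0 hη1 tendsto_one_div_add_atTop_nhds_zero_nat
    obtain ⟨z, hzK, g, hg, hdz⟩ := seqK d hdK
    have hzU : z ∉ U :=
      (hUopen.isClosed_compl).mem_of_tendsto hdz (Eventually.of_forall fun m => hdU (g m))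
    have hzw : w ≠ z := fun h => hzU (h ▸ hwU)
    obtain ⟨O, hOopen, hOmem, hOprop⟩ := Wloc w z (L1 w hwK z hzK hzw)
    have hwzk : W w z = k := hk w hwK z hzK hzw
    have hη2 : Tendsto (fun m => -(η (g m))) atTop (nhds 0) := by
      have h := (hηt.comp hg.tendsto_atTop).neg
      rwa [neg_zero] at h
    have hA1 : Tendsto (fun m => φ (-η (g m) + σs (j (g m))) u) atTop (nhds w) := by
      have h1 : Tendsto (fun m => φ (σs (j (g m))) u) atTop (nhds w) :=
        hcv.comp (hjt.comp hg.tendsto_atTop)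
      have h3 : Tendsto (fun m => φ (-η (g m)) (φ (σs (j (g m))) u)) atTop (nhds (φ 0 w)) :=
        (hφc.tendsto (0, w)).comp (hη2.prodMk_nhds h1)
      rw [hφ0] at h3
      exact h3.congr (fun m => (hφadd _ _ _).symm)
    have hA2 : Tendsto (fun m => φ (-η (g m)) (d (g m))) atTop (nhds z) := by
      have h3 := (hφc.tendsto (0, z)).comp (hη2.prodMk_nhds hdz)
      rwa [hφ0] at h3
    have hpair : Tendsto (fun m => ((φ (-η (g m) + σs (j (g m))) u, φ (-η (g m)) (d (g m))) : X × X))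
        atTop (nhds (w, z)) := hA1.prodMk_nhds hA2
    obtain ⟨m, hm⟩ := (hpair.eventually (hOopen.mem_nhds hOmem)).exists
    obtain ⟨-, hWm⟩ := hOprop _ _ hm
    have hv := hval (g m)
    rw [hWm] at hv
    omega
  obtain ⟨σ₀, hσ₀0, hMw⟩ := Mweak
    -- W ≡ k at late times against all of K
  have EvK : ∀ σ, σ₀ ≤ σ → ∀ y ∈ K, W (φ σ u) y = k := by
    intro σ hσ y hy
    obtain ⟨s, hs1, hsoff, hsval⟩ := LateK σ y hy 1
    have hcont : ContinuousOn (fun t : ℝ => W (φ (t + σ) u) (φ t y)) (Ici 0) := by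
      have hc : Continuous (fun t : ℝ => ((φ (t + σ) u, φ t y) : X × X)) := by
        refine Continuous.prodMk ?_ ?_
        · exact hφc.comp ((continuous_id.add continuous_const).prodMk continuous_const)
        · exact hφc.comp (continuous_id.prodMk continuous_const)
      refine (hWc.comp hc.continuousOn ?_ : _)
      intro t ht
      have ht' : (0:ℝ) ≤ t := ht
      exact hMw (t + σ) (by linarith) (φ t y) (flowK t y hy)
    have hc0 : (0:ℝ) ∈ Ici (0:ℝ) := self_mem_Ici
    have hcs : s ∈ Ici (0:ℝ) := mem_Ici.mpr (by linarith)
    have heq := const_on_int isPreconnected_Ici hcont hc0 hcs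
    rw [hsval] at heq
    rw [zero_add, hφ0] at heq
    exact heq
  -- constancy on the closure of the tail
  have LemN : ∀ x', x' ∈ closure {x : X | ∃ σ : ℝ, σ₀ ≤ σ ∧ x = φ σ u} → ∀ y ∈ K,
      (x', y) ∉ S → W x' y = k := by
    intro x' hx' y hy hS'
    obtain ⟨O, hOopen, hOmem, hOprop⟩ := Wloc x' y hS'
    have hnb : {p : X | (p, y) ∈ O} ∈ nhds x' := by
      have hc : Continuous (fun p : X => ((p, y) : X × X)) :=
        continuous_id.prodMk continuous_const
      exact hc.continuousAt.preimage_mem_nhds (hOopen.mem_nhds hOmem)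
    obtain ⟨x'', hx''⟩ := mem_closure_iff_nhds.mp hx' _ hnb
    obtain ⟨hx''O, σ, hσ, rfl⟩ := hx''
    obtain ⟨-, hW2⟩ := hOprop _ _ hx''O
    rw [← hW2]
    exact EvK σ hσ y hy
  have tailmono : ∀ c c' : ℝ, c ≤ c' →
      closure {x : X | ∃ σ : ℝ, c' ≤ σ ∧ x = φ σ u} ⊆
      closure {x : X | ∃ σ : ℝ, c ≤ σ ∧ x = φ σ u} := by
    intro c c' h
    refine closure_mono ?_
    rintro x ⟨σ, h1, h2⟩
    exact ⟨σ, le_trans h h1, h2⟩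
  have tailshift : ∀ (c t : ℝ) (x' : X), x' ∈ closure {x : X | ∃ σ : ℝ, c ≤ σ ∧ x = φ σ u} →
      φ t x' ∈ closure {x : X | ∃ σ : ℝ, c + t ≤ σ ∧ x = φ σ u} := by
    intro c t x' hx'
    have h1 : φ t x' ∈ φ t '' closure {x : X | ∃ σ : ℝ, c ≤ σ ∧ x = φ σ u} :=
      mem_image_of_mem _ hx'
    have h2 := image_closure_subset_closure_image (f := φ t) (hφcont t)
      (s := {x : X | ∃ σ : ℝ, c ≤ σ ∧ x = φ σ u}) h1
    refine closure_mono ?_ h2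
    rintro _ ⟨x'', ⟨σ, hσ, rfl⟩, rfl⟩
    exact ⟨t + σ, by linarith, (hφadd t σ u).symm⟩
  -- no S-pairs between the late tail closure and K
  have hMpp : ∀ u₁ ∈ closure {x : X | ∃ σ : ℝ, σ₀ + 1 ≤ σ ∧ x = φ σ u},
      ∀ w₁ ∈ K, u₁ ≠ w₁ → (u₁, w₁) ∉ S := by
    intro u₁ hu₁ w₁ hw₁ hne hS'
    obtain ⟨ε₄, hε₄, h4⟩ := hA4 _ _ hS' hne
    obtain ⟨ε₅, hε₅, h5⟩ := hA5 _ _ hS' hne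
    set δ : ℝ := min (min ε₄ ε₅) 1 / 2 with hδdef
    have hmin1 : min (min ε₄ ε₅) 1 ≤ min ε₄ ε₅ := min_le_left _ _
    have hmin2 : min (min ε₄ ε₅) 1 ≤ 1 := min_le_right _ _
    have hmm1 : min ε₄ ε₅ ≤ ε₄ := min_le_left _ _
    have hmm2 : min ε₄ ε₅ ≤ ε₅ := min_le_right _ _
    have hδpos : 0 < δ := by
      have : 0 < min (min ε₄ ε₅) 1 := lt_min (lt_min hε₄ hε₅) one_pos
      simp only [hδdef]; linarith
    have hδ4 : δ < ε₄ := by simp only [hδdef]; linarith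
    have hδ5 : δ < ε₅ := by simp only [hδdef]; linarith
    have hδ1 : δ ≤ 1/2 := by simp only [hδdef]; linarith
    have hp : (φ δ u₁, φ δ w₁) ∉ S :=
      h4 δ (ne_of_gt hδpos) (by rw [abs_of_pos hδpos]; exact hδ4)
    have hm : (φ (-δ) u₁, φ (-δ) w₁) ∉ S :=
      h4 (-δ) (ne_of_lt (by linarith)) (by rw [abs_neg, abs_of_pos hδpos]; exact hδ4)
    have hmem1 : φ δ u₁ ∈ closure {x : X | ∃ σ : ℝ, σ₀ ≤ σ ∧ x = φ σ u} :=
      tailmono σ₀ (σ₀ + 1 + δ) (by linarith) (tailshift (σ₀+1) δ u₁ hu₁)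
    have hmem2 : φ (-δ) u₁ ∈ closure {x : X | ∃ σ : ℝ, σ₀ ≤ σ ∧ x = φ σ u} :=
      tailmono σ₀ (σ₀ + 1 + -δ) (by linarith) (tailshift (σ₀+1) (-δ) u₁ hu₁)
    have hW1 := LemN _ hmem1 _ (flowK δ w₁ hw₁) hp
    have hW2 := LemN _ hmem2 _ (flowK (-δ) w₁ hw₁) hm
    have hlt := h5 (-δ) δ (by linarith) (by linarith) hδpos hδ5
    omega
  -- conclusion
  refine ⟨σ₀ + 1, by linarith, ?_, ?_⟩
  · intro u₁ hu₁ w₁ hw₁ hne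
    have hnotS : (u₁, w₁) ∉ S := hMpp u₁ hu₁ w₁ hw₁ hne
    exact ⟨hnotS, LemN u₁ (tailmono σ₀ (σ₀ + 1) (by linarith) hu₁) w₁ hw₁ hnotS⟩
  · rintro σ hσ ⟨w₁, hw₁K, hπeq⟩
    have hSp : (φ σ u, w₁) ∈ S := hA3 _ _ hπeq.symm
    have hne : φ σ u ≠ w₁ := fun h => ClaimC σ (h ▸ hw₁K)
    have hu₁ : φ σ u ∈ closure {x : X | ∃ σ' : ℝ, σ₀ + 1 ≤ σ' ∧ x = φ σ' u} :=
      subset_closure ⟨σ, hσ, rfl⟩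
    exact hMpp _ hu₁ w₁ hw₁K hne hSp
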